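/- Let K' = (k'_1,...,k'_p) where each k'_i divides k_i. In the natural quotient J(K) → J(K') (sending s_i to s̄_i), the image s̄_i has order exactly k'_i. Consequently, s_i^n lies in the kernel J(K|K') if and only if k'_i divides n. -/

import Mathlib

/-- The cyclically rotated product `a_i a_{i+1} ⋯ a_{i+p-1}` in the free group on `Fin p`
(indices taken mod `p`). -/
def cycProd (p : ℕ) (i : Fin p) : FreeGroup (Fin p) :=
  (List.ofFn (fun j : Fin p => FreeGroup.of (i + j))).prod

/-- Relators of the generalized parent J-group `J(K)`:
`⟨s_1,…,s_p ∣ s_1⋯s_p = s_2⋯s_p s_1 = ⋯ = s_p s_1⋯s_{p-1}, s_i^{k_i} = 1 if k_i < ∞⟩`.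
Here `k i = 0` encodes `k_i = ∞` (the relator `s_i ^ 0` is vacuous), and the equalities of
all cyclic rotations of the product are encoded by the relators
`(s_i ⋯ s_{i+p-1}) (s_j ⋯ s_{j+p-1})⁻¹`. -/
def JRels (p : ℕ) (k : Fin p → ℕ) : Set (FreeGroup (Fin p)) :=
  {r | (∃ i, r = FreeGroup.of i ^ k i) ∨ ∃ i j, r = cycProd p i * (cycProd p j)⁻¹}

/-- The generalized parent J-group `J(K)`. -/
abbrev JGroup (p : ℕ) (k : Fin p → ℕ) := PresentedGroup (JRels p k)

/-- The central element `z = s_1 s_2 ⋯ s_p` of `J(K)`. -/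
def zElt (p : ℕ) (k : Fin p → ℕ) : JGroup p k :=
  (List.ofFn (fun i : Fin p => (PresentedGroup.of i : JGroup p k))).prod


lemma JGroup.pow_eq_one (p : ℕ) (k : Fin p → ℕ) (i : Fin p) :
    (PresentedGroup.of i : JGroup p k) ^ k i = 1 := by
  have : (QuotientGroup.mk (FreeGroup.of i ^ k i) : JGroup p k) = 1 := by
    rw [QuotientGroup.eq_one_iff]
    exact Subgroup.subset_normalClosure (Or.inl ⟨i, rfl⟩)
  rw [PresentedGroup.of, ← map_pow]
  exact this

/-- The abelianizing homomorphism killing all generators but `i`. -/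
lemma JGroup.exists_hom (p : ℕ) (k : Fin p → ℕ) (i : Fin p) :
    ∃ φ : JGroup p k →* Multiplicative (ZMod (k i)),
      φ (PresentedGroup.of i) = Multiplicative.ofAdd 1 := by
  set f : Fin p → Multiplicative (ZMod (k i)) :=
    fun j => if j = i then Multiplicative.ofAdd 1 else 1 with hf
  haveI : NeZero p := ⟨i.pos.ne'⟩
  have key : ∀ a : Fin p, FreeGroup.lift f (cycProd p a) = Multiplicative.ofAdd 1 := by
    intro a
    rw [cycProd, map_list_prod]
    have h1 : (List.map (FreeGroup.lift f) (List.ofFn fun j : Fin p => FreeGroup.of (a + j)))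
        = List.ofFn fun j : Fin p => f (a + j) := by
      simp only [List.map_ofFn, Function.comp_def, FreeGroup.lift_apply_of]
    rw [h1, List.prod_ofFn]
    have h2 : ∏ j : Fin p, f (a + j) = ∏ j : Fin p, f j := Equiv.prod_comp (Equiv.addLeft a) f
    rw [h2]
    simp only [hf]
    rw [Finset.prod_ite_eq' Finset.univ i (fun _ => Multiplicative.ofAdd (1 : ZMod (k i)))]
    simp
  have h : ∀ r ∈ JRels p k, FreeGroup.lift f r = 1 := by
    rintro r (⟨j, rfl⟩ | ⟨a, b, rfl⟩)
    · rw [map_pow, FreeGroup.lift_apply_of]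
      by_cases hji : j = i
      · subst hji
        simp [hf, ← ofAdd_nsmul]
      · simp [hf, hji]
    · rw [map_mul, map_inv, key, key, mul_inv_cancel]
  refine ⟨PresentedGroup.toGroup h, ?_⟩
  rw [PresentedGroup.toGroup.of h]
  simp [hf]

lemma JGroup.orderOf_of (p : ℕ) (k : Fin p → ℕ) (i : Fin p) :
    orderOf (PresentedGroup.of i : JGroup p k) = k i := by
  obtain ⟨φ, hφ⟩ := JGroup.exists_hom p k i
  refine Nat.dvd_antisymm (orderOf_dvd_of_pow_eq_one (JGroup.pow_eq_one p k i)) ?_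
  have h1 : orderOf (φ (PresentedGroup.of i)) ∣ orderOf (PresentedGroup.of i : JGroup p k) :=
    orderOf_map_dvd φ _
  rwa [hφ, orderOf_ofAdd_eq_addOrderOf, ZMod.addOrderOf_one] at h1

/-- Let `K' = (k'_1,…,k'_p)` with each `k'_i` a (finite) divisor of `k_i`,
and let `π : J(K) →* J(K')` be the natural quotient map (sending `s_i` to `s̄_i`).  Then the
image `s̄_i` has order exactly `k'_i`, and consequently `s_i^n ∈ J(K∣K') = ker π` if and only
if `k'_i ∣ n`. -/
theorem stmt7 (p : ℕ) (k k' : Fin p → ℕ) (hk : ∀ i, k i ≠ 1)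
    (hdvd : ∀ i, k' i ∣ k i) (hfin : ∀ i, k' i ≠ 0)
    (π : JGroup p k →* JGroup p k') (hπ : ∀ i, π (PresentedGroup.of i) = PresentedGroup.of i) :
    (∀ i : Fin p, orderOf (PresentedGroup.of i : JGroup p k') = k' i) ∧
    (∀ (i : Fin p) (n : ℕ),
      ((PresentedGroup.of i : JGroup p k) ^ n ∈ π.ker ↔ k' i ∣ n)) := by
  refine ⟨fun i => JGroup.orderOf_of p k' i, fun i n => ?_⟩
  rw [MonoidHom.mem_ker, map_pow, hπ, ← JGroup.orderOf_of p k' i, orderOf_dvd_iff_pow_eq_one]
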